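/- Let (X_k)_{k≥1} be i.i.d. real random variables, set S₀ := 0 and S_n := X₁ + ⋯ + X_n dla n ≥ 1. Let τ be a geometric random variable with P(τ = n) = p(1−p)^{n−1} for n ≥ 1 (where 0 < p < 1), independent of (X_k)_{k≥1}. Then for all real numbers u and u₀ with 0 < u₀ < u one has P( max_{0 ≤ k < τ} S_k > u ) · P( S_τ ≥ −u₀ ) ≤ P( S_τ ≥ u − u₀ ). In particular, if P(S_τ ≥ −u₀) > 0 then P( max_{0 ≤ k < τ} S_k > u ) ≤ P( S_τ ≥ u − u₀ ) / P( S_τ ≥ −u₀ ). -/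

import Mathlib

open MeasureTheory ProbabilityTheory Filter

section Aux

variable {Ω : Type*} [MeasurableSpace Ω] {μ : Measure Ω} [IsProbabilityMeasure μ]

lemma aux_identDistrib_add {f g f' g' : Ω → ℝ}
    (hf : AEMeasurable f μ) (hg : AEMeasurable g μ)
    (hf' : AEMeasurable f' μ) (hg' : AEMeasurable g' μ)
    (hfg : IndepFun f g μ) (hfg' : IndepFun f' g' μ)
    (h1 : IdentDistrib f f' μ μ) (h2 : IdentDistrib g g' μ μ) :
    IdentDistrib (fun ω => f ω + g ω) (fun ω => f' ω + g' ω) μ μ := by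
  have hpair : IdentDistrib (fun ω => (f ω, g ω)) (fun ω => (f' ω, g' ω)) μ μ := by
    refine ⟨hf.prodMk hg, hf'.prodMk hg', ?_⟩
    rw [(indepFun_iff_map_prod_eq_prod_map_map hf hg).1 hfg,
      (indepFun_iff_map_prod_eq_prod_map_map hf' hg').1 hfg',
      h1.map_eq, h2.map_eq]
  exact hpair.comp measurable_add

lemma aux_shift_sum_identDistrib (X : ℕ → Ω → ℝ) (hX : ∀ k, Measurable (X k))
    (hindep : iIndepFun X μ)
    (hident : ∀ k, IdentDistrib (X k) (X 0) μ μ) (k : ℕ) :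
    ∀ m, IdentDistrib (fun ω => ∑ j ∈ Finset.range m, X (k + j) ω)
      (fun ω => ∑ j ∈ Finset.range m, X j ω) μ μ := by
  intro m
  induction m with
  | zero =>
      simpa using (IdentDistrib.refl (f := fun _ : Ω => (0:ℝ)) aemeasurable_const)
  | succ m ih =>
      have h1 : IndepFun (fun ω => ∑ j ∈ Finset.range m, X (k + j) ω) (X (k + m)) μ := by
        have h := hindep.indepFun_finsetSum_of_notMem hX
          (s := (Finset.range m).map ⟨fun j => k + j, add_right_injective k⟩) (i := k + m)
          (by
            intro h
            simp only [Finset.mem_map, Finset.mem_range, Function.Embedding.coeFn_mk] at h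
            obtain ⟨a, ha, hax⟩ := h
            omega)
        have heq : (∑ j ∈ (Finset.range m).map ⟨fun j => k + j, add_right_injective k⟩, X j)
            = fun ω => ∑ j ∈ Finset.range m, X (k + j) ω := by
          funext ω
          rw [Finset.sum_apply, Finset.sum_map]
          rfl
        rwa [heq] at h
      have h2 : IndepFun (fun ω => ∑ j ∈ Finset.range m, X j ω) (X m) μ := by
        have h := hindep.indepFun_finsetSum_of_notMem hX (s := Finset.range m) (i := m)
          (by simp)
        have heq : (∑ j ∈ Finset.range m, X j) = fun ω => ∑ j ∈ Finset.range m, X j ω := by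
          funext ω; rw [Finset.sum_apply]
        rwa [heq] at h
      have hsm : Measurable fun ω => ∑ j ∈ Finset.range m, X (k + j) ω :=
        Finset.measurable_sum _ fun i _ => hX _
      have hsm' : Measurable fun ω => ∑ j ∈ Finset.range m, X j ω :=
        Finset.measurable_sum _ fun i _ => hX _
      simp only [Finset.sum_range_succ]
      exact aux_identDistrib_add hsm.aemeasurable (hX _).aemeasurable hsm'.aemeasurable
        (hX _).aemeasurable h1 h2 ih ((hident _).trans (hident m).symm)

end Aux

set_option maxHeartbeats 1000000 in
/-- **Discrete-time form of Lemma 4.1 (Willekens-type bound).** For an i.i.d.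
random walk `S` and an independent geometric time `τ` (with `P(τ = n) =
p(1-p)^(n-1)` for `n ≥ 1`), and `0 < u₀ < u`:
`P(max_{0 ≤ k < τ} S_k > u) · P(S_τ ≥ -u₀) ≤ P(S_τ ≥ u - u₀)`; in particular if
`P(S_τ ≥ -u₀) > 0` then
`P(max_{0 ≤ k < τ} S_k > u) ≤ P(S_τ ≥ u - u₀) / P(S_τ ≥ -u₀)`. -/
theorem geometric_time_maximum_tail_bound
    {Ω : Type*} [MeasurableSpace Ω] (μ : Measure Ω) [IsProbabilityMeasure μ]
    (X : ℕ → Ω → ℝ) (hX : ∀ k, Measurable (X k))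
    (hindep : iIndepFun X μ)
    (hident : ∀ k, IdentDistrib (X k) (X 0) μ μ)
    (τ : Ω → ℕ) (hτ : Measurable τ)
    (p : ℝ) (hp : 0 < p) (hp1 : p < 1)
    (hgeom : ∀ n : ℕ, μ {ω | τ ω = n + 1} = ENNReal.ofReal (p * (1 - p) ^ n))
    (hτindep : IndepFun τ (fun ω (k : ℕ) => X k ω) μ)
    (S : ℕ → Ω → ℝ) (hS : ∀ n ω, S n ω = ∑ k ∈ Finset.range n, X k ω)
    (u u₀ : ℝ) (h0 : 0 < u₀) (hu : u₀ < u) :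
    μ {ω | ∃ k < τ ω, S k ω > u} * μ {ω | S (τ ω) ω ≥ -u₀} ≤
      μ {ω | S (τ ω) ω ≥ u - u₀} ∧
    (0 < μ {ω | S (τ ω) ω ≥ -u₀} →
      (μ {ω | ∃ k < τ ω, S k ω > u}).toReal ≤
        (μ {ω | S (τ ω) ω ≥ u - u₀}).toReal / (μ {ω | S (τ ω) ω ≥ -u₀}).toReal) := by
  classical
  -- basic measurability
  have hSm : ∀ n, Measurable (S n) := by
    intro n
    have hSe : S n = fun ω => ∑ k ∈ Finset.range n, X k ω := funext fun ω => hS n ω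
    rw [hSe]; exact Finset.measurable_sum _ fun i _ => hX i
  set Y : Ω → ℕ → ℝ := fun ω k => X k ω with hYdef
  have hsum_meas : ∀ n : ℕ, Measurable fun f : ℕ → ℝ => ∑ j ∈ Finset.range n, f j :=
    fun n => Finset.measurable_sum _ fun i _ => measurable_pi_apply i
  -- first-passage sets
  set E : ℕ → Set Ω := fun k => {ω | u < S k ω ∧ ∀ j < k, S j ω ≤ u} with hEdef
  set Et : ℕ → Set (ℕ → ℝ) := fun k =>
    {f | u < ∑ j ∈ Finset.range k, f j ∧ ∀ j < k, ∑ i ∈ Finset.range j, f i ≤ u} with hEtdef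
  have hEtm : ∀ k, MeasurableSet (Et k) := by
    intro k
    have h1 : MeasurableSet {f : ℕ → ℝ | u < ∑ j ∈ Finset.range k, f j} :=
      measurableSet_lt measurable_const (hsum_meas k)
    have h2 : MeasurableSet {f : ℕ → ℝ | ∀ j < k, ∑ i ∈ Finset.range j, f i ≤ u} := by
      have he : {f : ℕ → ℝ | ∀ j < k, ∑ i ∈ Finset.range j, f i ≤ u}
          = ⋂ j ∈ Set.Iio k, {f : ℕ → ℝ | ∑ i ∈ Finset.range j, f i ≤ u} := by
        ext f; simp
      rw [he]
      exact MeasurableSet.biInter (Set.to_countable _)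
        fun j _ => measurableSet_le (hsum_meas j) measurable_const
    exact h1.inter h2
  have hEY : ∀ k, E k = Y ⁻¹' (Et k) := by
    intro k; ext ω
    simp only [hEdef, hEtdef, Set.mem_setOf_eq, Set.mem_preimage, hYdef, hS]
  have hEm : ∀ k, MeasurableSet (E k) := by
    intro k
    rw [hEY k]
    exact (measurable_pi_lambda _ hX) (hEtm k)
  -- block sums
  set W : ℕ → ℕ → Ω → ℝ := fun k m ω => ∑ j ∈ Finset.range (m + 1), X (k + j) ω with hWdef
  set Wt : ℕ → ℕ → (ℕ → ℝ) → ℝ := fun k m f => ∑ j ∈ Finset.range (m + 1), f (k + j) with hWtdef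
  have hWtm : ∀ k m, Measurable (Wt k m) :=
    fun k m => Finset.measurable_sum _ fun i _ => measurable_pi_apply _
  have hWm : ∀ k m, Measurable (W k m) :=
    fun k m => Finset.measurable_sum _ fun i _ => hX _
  -- τ independence
  have hτfact : ∀ (s : Set ℕ) (t : Set (ℕ → ℝ)), MeasurableSet t →
      μ (τ ⁻¹' s ∩ Y ⁻¹' t) = μ (τ ⁻¹' s) * μ (Y ⁻¹' t) :=
    fun s t ht => hτindep.measure_inter_preimage_eq_mul s t .of_discrete ht
  -- geometric facts
  set q : ENNReal := ENNReal.ofReal (1 - p) with hqdef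
  have h1p : (0:ℝ) ≤ 1 - p := by linarith
  have hofp : ∀ n : ℕ, ENNReal.ofReal (p * (1 - p) ^ n) = ENNReal.ofReal p * q ^ n := by
    intro n; rw [ENNReal.ofReal_mul hp.le, ENNReal.ofReal_pow h1p]
  have h1q : (1 : ENNReal) - q = ENNReal.ofReal p := by
    rw [hqdef, ← ENNReal.ofReal_one, ← ENNReal.ofReal_sub _ h1p]
    norm_num
  have hgeosum : ∑' m : ℕ, ENNReal.ofReal p * q ^ m = 1 := by
    rw [ENNReal.tsum_mul_left, ENNReal.tsum_geometric, h1q,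
      ENNReal.mul_inv_cancel (ne_of_gt (ENNReal.ofReal_pos.2 hp)) ENNReal.ofReal_ne_top]
  have hτn : ∀ n : ℕ, μ (τ ⁻¹' {n + 1}) = ENNReal.ofReal p * q ^ n := by
    intro n
    rw [← hofp n, ← hgeom n]
    rfl
  have hτgt : ∀ k : ℕ, μ (τ ⁻¹' Set.Ioi k) = q ^ k := by
    intro k
    have hU : τ ⁻¹' Set.Ioi k = ⋃ m : ℕ, τ ⁻¹' {k + m + 1} := by
      ext ω
      simp only [Set.mem_preimage, Set.mem_Ioi, Set.mem_iUnion, Set.mem_singleton_iff]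
      constructor
      · intro h; exact ⟨τ ω - k - 1, by omega⟩
      · rintro ⟨m, hm⟩; omega
    have hd : Pairwise (Function.onFun Disjoint fun m : ℕ => τ ⁻¹' {k + m + 1}) := by
      intro i j hij
      simp only [Function.onFun, Set.disjoint_left]
      rintro ω h1 h2
      simp only [Set.mem_preimage, Set.mem_singleton_iff] at h1 h2
      omega
    rw [hU, measure_iUnion hd fun m => hτ .of_discrete]
    calc ∑' m : ℕ, μ (τ ⁻¹' {k + m + 1}) = ∑' m : ℕ, ENNReal.ofReal p * q ^ (k + m) :=
          tsum_congr fun m => hτn (k + m)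
      _ = ∑' m : ℕ, q ^ k * (ENNReal.ofReal p * q ^ m) := by
          apply tsum_congr; intro m; rw [pow_add]; ring
      _ = q ^ k * ∑' m : ℕ, ENNReal.ofReal p * q ^ m := ENNReal.tsum_mul_left
      _ = q ^ k := by rw [hgeosum, mul_one]
  have hτ0 : μ (τ ⁻¹' {0}) = 0 := by
    have hc : τ ⁻¹' {0} = (τ ⁻¹' Set.Ioi 0)ᶜ := by
      ext ω; simp only [Set.mem_preimage, Set.mem_singleton_iff, Set.mem_compl_iff, Set.mem_Ioi]
      omega
    rw [hc, measure_compl (hτ .of_discrete) (measure_ne_top μ _), hτgt 0, pow_zero,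
      measure_univ, tsub_self]
  -- identical distribution of blocks
  have hWident : ∀ k m, μ {ω | -u₀ ≤ W k m ω} = μ {ω | -u₀ ≤ S (m + 1) ω} := by
    intro k m
    have hid := aux_shift_sum_identDistrib X hX hindep hident k (m + 1)
    have h := hid.measure_mem_eq (measurableSet_Ici (a := -u₀))
    have e2 : {ω | -u₀ ≤ S (m + 1) ω}
        = (fun ω => ∑ j ∈ Finset.range (m + 1), X j ω) ⁻¹' Set.Ici (-u₀) := by
      ext ω; simp [hS]
    rw [e2]
    exact h
  -- independence of E k and block event
  have hblock : ∀ k m, μ (E k ∩ {ω | -u₀ ≤ W k m ω}) = μ (E k) * μ {ω | -u₀ ≤ W k m ω} := by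
    intro k m
    set M1 : MeasurableSpace Ω := ⨆ i ∈ Set.Iio k, MeasurableSpace.comap (X i) inferInstance
      with hM1
    set M2 : MeasurableSpace Ω := ⨆ i ∈ Set.Ici k, MeasurableSpace.comap (X i) inferInstance
      with hM2
    have hind : Indep M1 M2 μ :=
      indep_iSup_of_disjoint (fun i => (hX i).comap_le) hindep (Set.Iio_disjoint_Ici le_rfl)
    have hXM1 : ∀ i < k, Measurable[M1] (X i) := fun i hi =>
      Measurable.of_comap_le
        (le_iSup₂ (f := fun i (_ : i ∈ Set.Iio k) => MeasurableSpace.comap (X i) inferInstance)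
          i hi)
    have hSM1 : ∀ j ≤ k, Measurable[M1] (S j) := by
      intro j hj
      have hSe : S j = fun ω => ∑ i ∈ Finset.range j, X i ω := funext fun ω => hS j ω
      rw [hSe]
      exact Finset.measurable_sum _ fun i hi =>
        hXM1 i (lt_of_lt_of_le (Finset.mem_range.1 hi) hj)
    have hm1 : MeasurableSet[M1] (E k) := by
      have he : E k = {ω | u < S k ω} ∩ ⋂ j ∈ Set.Iio k, {ω | S j ω ≤ u} := by
        ext ω; simp [hEdef]
      rw [he]
      exact (measurableSet_lt measurable_const (hSM1 k le_rfl)).inter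
        (MeasurableSet.biInter (Set.to_countable _)
          fun j hj => measurableSet_le (hSM1 j (le_of_lt hj)) measurable_const)
    have hm2 : MeasurableSet[M2] {ω | -u₀ ≤ W k m ω} := by
      have hWM2 : Measurable[M2] (W k m) := by
        apply Finset.measurable_sum
        intro i _
        exact Measurable.of_comap_le
          (le_iSup₂ (f := fun i (_ : i ∈ Set.Ici k) => MeasurableSpace.comap (X i) inferInstance)
            (k + i) (Nat.le_add_right k i))
      exact measurableSet_le measurable_const hWM2
    exact (Indep_iff M1 M2 μ).1 hind _ _ hm1 hm2
  -- decomposition of A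
  have hAdecomp : {ω | ∃ k < τ ω, S k ω > u} = ⋃ k, (E k ∩ τ ⁻¹' Set.Ioi k) := by
    ext ω
    simp only [Set.mem_setOf_eq, Set.mem_iUnion, Set.mem_inter_iff, Set.mem_preimage,
      Set.mem_Ioi, hEdef, gt_iff_lt]
    constructor
    · rintro ⟨k, hk, hSk⟩
      have hex : ∃ n, u < S n ω := ⟨k, hSk⟩
      exact ⟨Nat.find hex, ⟨Nat.find_spec hex, fun j hj => le_of_not_gt (Nat.find_min hex hj)⟩,
        lt_of_le_of_lt (Nat.find_min' hex hSk) hk⟩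
    · rintro ⟨k, ⟨h1, _⟩, h2⟩; exact ⟨k, h2, h1⟩
  have hEdisj : Pairwise (Function.onFun Disjoint E) := by
    have key : ∀ k l, k < l → Disjoint (E k) (E l) := by
      intro k l h
      rw [Set.disjoint_left]
      rintro ω ⟨hk1, _⟩ ⟨_, hl2⟩
      exact absurd hk1 (not_lt.2 (hl2 k h))
    intro k l hkl
    rcases hkl.lt_or_gt with h | h
    · exact key k l h
    · exact (key l k h).symm
  have hA : μ {ω | ∃ k < τ ω, S k ω > u} = ∑' k, μ (E k) * q ^ k := by
    rw [hAdecomp, measure_iUnion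
      (fun k l hkl => (hEdisj hkl).mono Set.inter_subset_left Set.inter_subset_left)
      (fun k => (hEm k).inter (hτ .of_discrete))]
    apply tsum_congr; intro k
    rw [Set.inter_comm, hEY k, hτfact _ _ (hEtm k), hτgt k, ← hEY k, mul_comm]
  -- decomposition of D = {S_τ ≥ -u₀}
  have hCt : ∀ n : ℕ, {ω | -u₀ ≤ S n ω} = Y ⁻¹' {f | -u₀ ≤ ∑ i ∈ Finset.range n, f i} := by
    intro n; ext ω; simp [hS, hYdef]
  have hD : μ {ω | S (τ ω) ω ≥ -u₀}
      = ∑' m : ℕ, ENNReal.ofReal p * q ^ m * μ {ω | -u₀ ≤ S (m + 1) ω} := by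
    have hDdecomp : {ω | S (τ ω) ω ≥ -u₀} = ⋃ n : ℕ, (τ ⁻¹' {n} ∩ {ω | -u₀ ≤ S n ω}) := by
      ext ω
      simp only [ge_iff_le, Set.mem_setOf_eq, Set.mem_iUnion, Set.mem_inter_iff,
        Set.mem_preimage, Set.mem_singleton_iff]
      constructor
      · intro h; exact ⟨τ ω, rfl, h⟩
      · rintro ⟨n, hn, h⟩; rw [hn]; exact h
    have hd : Pairwise (Function.onFun Disjoint fun n : ℕ => τ ⁻¹' {n} ∩ {ω | -u₀ ≤ S n ω}) := by
      intro i j hij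
      simp only [Function.onFun, Set.disjoint_left]
      rintro ω ⟨h1, _⟩ ⟨h2, _⟩
      simp only [Set.mem_preimage, Set.mem_singleton_iff] at h1 h2
      exact hij (h1 ▸ h2)
    rw [hDdecomp, measure_iUnion hd
      (fun n => (hτ .of_discrete).inter (measurableSet_le measurable_const (hSm n)))]
    rw [tsum_eq_zero_add' ENNReal.summable]
    have h00 : μ (τ ⁻¹' {0} ∩ {ω | -u₀ ≤ S 0 ω}) = 0 :=
      le_antisymm (le_trans (measure_mono Set.inter_subset_left) hτ0.le) zero_le
    rw [h00, zero_add]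
    apply tsum_congr; intro n
    rw [hCt (n + 1), hτfact _ _ (measurableSet_le measurable_const (hsum_meas (n + 1))),
      hτn n, ← hCt (n + 1)]
  -- the key family H k m
  set H : ℕ → ℕ → Set Ω := fun k m => (E k ∩ {ω | -u₀ ≤ W k m ω}) ∩ τ ⁻¹' {k + m + 1}
    with hHdef
  have hHm : ∀ k m, MeasurableSet (H k m) := fun k m =>
    ((hEm k).inter (measurableSet_le measurable_const (hWm k m))).inter (hτ .of_discrete)
  have hHsub : ∀ k m, H k m ⊆ {ω | S (τ ω) ω ≥ u - u₀} := by
    rintro k m ω ⟨⟨⟨hEk1, _⟩, hW⟩, hτω⟩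
    simp only [Set.mem_preimage, Set.mem_singleton_iff] at hτω
    simp only [Set.mem_setOf_eq] at hW ⊢
    have hsplit : S (τ ω) ω = S k ω + W k m ω := by
      rw [hτω]
      show S (k + (m + 1)) ω = _
      rw [hS, Finset.sum_range_add, hS, hWdef]
    rw [ge_iff_le, hsplit]
    have := hEk1
    change u < S k ω at this
    linarith [this, hW]
  have hHmeasure : ∀ k m, μ (H k m)
      = μ (E k) * (ENNReal.ofReal p * q ^ (k + m)) * μ {ω | -u₀ ≤ S (m + 1) ω} := by
    intro k m
    have hEG : E k ∩ {ω | -u₀ ≤ W k m ω} = Y ⁻¹' (Et k ∩ {f | -u₀ ≤ Wt k m f}) := by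
      ext ω
      simp only [Set.mem_inter_iff, Set.mem_preimage, Set.mem_setOf_eq, hEY k]
      exact Iff.rfl
    have hEGm : MeasurableSet (Et k ∩ {f | -u₀ ≤ Wt k m f}) :=
      (hEtm k).inter (measurableSet_le measurable_const (hWtm k m))
    simp only [hHdef]
    rw [Set.inter_comm (E k ∩ {ω | -u₀ ≤ W k m ω}), hEG, hτfact _ _ hEGm, ← hEG,
      hblock k m, hWident k m, hτn (k + m)]
    ring
  -- disjointness of the H family
  have hHdisj_m : ∀ k, Pairwise (Function.onFun Disjoint fun m => H k m) := by
    intro k i j hij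
    simp only [Function.onFun, Set.disjoint_left]
    rintro ω ⟨_, h1⟩ ⟨_, h2⟩
    simp only [Set.mem_preimage, Set.mem_singleton_iff] at h1 h2
    omega
  have hHdisj_k : Pairwise (Function.onFun Disjoint fun k => ⋃ m, H k m) := by
    intro k l hkl
    refine (hEdisj hkl).mono ?_ ?_
    · exact Set.iUnion_subset fun m => Set.inter_subset_left.trans Set.inter_subset_left
    · exact Set.iUnion_subset fun m => Set.inter_subset_left.trans Set.inter_subset_left
  -- main inequality
  have hmain : μ {ω | ∃ k < τ ω, S k ω > u} * μ {ω | S (τ ω) ω ≥ -u₀} ≤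
      μ {ω | S (τ ω) ω ≥ u - u₀} := by
    calc μ {ω | ∃ k < τ ω, S k ω > u} * μ {ω | S (τ ω) ω ≥ -u₀}
        = (∑' k, μ (E k) * q ^ k) *
            ∑' m : ℕ, ENNReal.ofReal p * q ^ m * μ {ω | -u₀ ≤ S (m + 1) ω} := by
          rw [hA, hD]
      _ = ∑' k, (μ (E k) * q ^ k *
            ∑' m : ℕ, ENNReal.ofReal p * q ^ m * μ {ω | -u₀ ≤ S (m + 1) ω}) :=
          ENNReal.tsum_mul_right.symm
      _ = ∑' k, ∑' m : ℕ, μ (E k) * q ^ k *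
            (ENNReal.ofReal p * q ^ m * μ {ω | -u₀ ≤ S (m + 1) ω}) :=
          tsum_congr fun k => ENNReal.tsum_mul_left.symm
      _ = ∑' k, ∑' m : ℕ, μ (H k m) := by
          apply tsum_congr; intro k; apply tsum_congr; intro m
          rw [hHmeasure k m, pow_add]; ring
      _ = ∑' k, μ (⋃ m, H k m) :=
          tsum_congr fun k => (measure_iUnion (hHdisj_m k) (hHm k)).symm
      _ = μ (⋃ k, ⋃ m, H k m) :=
          (measure_iUnion hHdisj_k fun k => MeasurableSet.iUnion (hHm k)).symm
      _ ≤ μ {ω | S (τ ω) ω ≥ u - u₀} :=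
          measure_mono (Set.iUnion_subset fun k => Set.iUnion_subset fun m => hHsub k m)
  refine ⟨hmain, fun hb => ?_⟩
  have hbpos : 0 < (μ {ω | S (τ ω) ω ≥ -u₀}).toReal :=
    ENNReal.toReal_pos hb.ne' (measure_ne_top μ _)
  rw [le_div_iff₀ hbpos, ← ENNReal.toReal_mul]
  exact ENNReal.toReal_mono (measure_ne_top μ _) hmain
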